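/- Consider a relay network with c layers and no intermediate randomness: for each j ∈ {1,…,c} let Y_{j,1},…,Y_{j,k_j} be random variables each taking values in a fixed finite set of cardinality d, write Ȳ_j = (Y_{j,1},…,Y_{j,k_j}), and assume H(Ȳ_j | Ȳ_{j−1}) = 0 for j = 2,…,c and H(M | Ȳ_c) = 0, where M is a finitely-valued random variable (the message). Then for integers r_j with 0 ≤ r_j ≤ k_j, max over all tuples (s_1,…,s_c) with s_j ⊆ {1,…,k_j} and |s_j| = r_j of I(M ; (Y_{j,i})_{j∈{1,…,c}, i∈s_j}) ≥ H(M) − (log d) · min_{1 ≤ j ≤ c} (k_j − r_j) · ∏_{i=j+1}^{c} (k_i − r_i)/k_i. -/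

import Mathlib

open Finset

/-- Probability that the finitely-valued random variable `X` takes value `x`,
with respect to the probability mass function `p` on the finite sample space `Ω`. -/
noncomputable def pmfProb {Ω : Type*} [Fintype Ω] {α : Type*} [Fintype α] [DecidableEq α]
    (p : Ω → ℝ) (X : Ω → α) (x : α) : ℝ :=
  ∑ ω, if X ω = x then p ω else 0

/-- Shannon entropy (natural logarithm) of the random variable `X`. -/
noncomputable def entH {Ω : Type*} [Fintype Ω] {α : Type*} [Fintype α] [DecidableEq α]
    (p : Ω → ℝ) (X : Ω → α) : ℝ :=
  ∑ x, Real.negMulLog (pmfProb p X x)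

/-- Conditional Shannon entropy `H(X|Y) = H(X,Y) - H(Y)`. -/
noncomputable def condH {Ω : Type*} [Fintype Ω] {α β : Type*} [Fintype α] [DecidableEq α]
    [Fintype β] [DecidableEq β] (p : Ω → ℝ) (X : Ω → α) (Y : Ω → β) : ℝ :=
  entH p (fun ω => (X ω, Y ω)) - entH p Y

/-- Mutual information `I(X;Y) = H(X) + H(Y) - H(X,Y)`. -/
noncomputable def mutInfo {Ω : Type*} [Fintype Ω] {α β : Type*} [Fintype α] [DecidableEq α]
    [Fintype β] [DecidableEq β] (p : Ω → ℝ) (X : Ω → α) (Y : Ω → β) : ℝ :=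
  entH p X + entH p Y - entH p (fun ω => (X ω, Y ω))

/-- The conditional probability mass function given an event `E`. -/
noncomputable def condPMF {Ω : Type*} [Fintype Ω] (p : Ω → ℝ) (E : Ω → Prop)
    [DecidablePred E] : Ω → ℝ :=
  fun ω => if E ω then p ω / (∑ ω' ∈ Finset.univ.filter E, p ω') else 0

section Toolkit

set_option linter.unusedSectionVars false

variable {Ω : Type*} [Fintype Ω] {α β γ δ : Type*} [Fintype α] [DecidableEq α]
  [Fintype β] [DecidableEq β] [Fintype γ] [DecidableEq γ] [Fintype δ] [DecidableEq δ]
  (p : Ω → ℝ)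

lemma pmfProb_nonneg (hp : ∀ ω, 0 ≤ p ω) (X : Ω → α) (x : α) : 0 ≤ pmfProb p X x := by
  apply Finset.sum_nonneg; intro ω _; split <;> simp [hp ω]

lemma sum_pmfProb (X : Ω → α) : ∑ x, pmfProb p X x = ∑ ω, p ω := by
  simp only [pmfProb]; rw [Finset.sum_comm]; simp

lemma pmfProb_comp (X : Ω → α) (g : α → β) (y : β) :
    pmfProb p (fun ω => g (X ω)) y = ∑ x ∈ univ.filter (fun x => g x = y), pmfProb p X x := by
  simp only [pmfProb]
  rw [Finset.sum_comm]
  refine Finset.sum_congr rfl fun ω _ => ?_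
  rw [Finset.sum_ite_eq (univ.filter (fun x => g x = y)) (X ω) (fun _ => p ω)]
  simp

lemma negMulLog_sum_le {s : Finset γ} (f : γ → ℝ) (hf : ∀ x ∈ s, 0 ≤ f x) :
    Real.negMulLog (∑ x ∈ s, f x) ≤ ∑ x ∈ s, Real.negMulLog (f x) := by
  have hA : ∀ x ∈ s, f x ≤ ∑ y ∈ s, f y := fun x hx => Finset.single_le_sum hf hx
  rw [Real.negMulLog, neg_mul, Finset.sum_mul]
  rw [neg_le]
  rw [← Finset.sum_neg_distrib]
  apply Finset.sum_le_sum
  intro x hx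
  rw [Real.negMulLog, neg_mul, neg_neg]
  rcases eq_or_lt_of_le (hf x hx) with h0 | h0
  · simp [← h0]
  · exact mul_le_mul_of_nonneg_left (Real.log_le_log h0 (hA x hx)) (hf x hx)

lemma entH_comp_le (hp : ∀ ω, 0 ≤ p ω) (X : Ω → α) (g : α → β) :
    entH p (fun ω => g (X ω)) ≤ entH p X := by
  unfold entH
  calc ∑ y, Real.negMulLog (pmfProb p (fun ω => g (X ω)) y)
      ≤ ∑ y, ∑ x ∈ univ.filter (fun x => g x = y), Real.negMulLog (pmfProb p X x) := by
        apply Finset.sum_le_sum; intro y _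
        rw [pmfProb_comp]
        exact negMulLog_sum_le _ (fun x _ => pmfProb_nonneg p hp X x)
    _ = ∑ x, Real.negMulLog (pmfProb p X x) := Finset.sum_fiberwise univ g _

lemma entH_eq_of_inv (hp : ∀ ω, 0 ≤ p ω) (X : Ω → α) (X' : Ω → β) (g : α → β) (h : β → α)
    (h1 : ∀ ω, X' ω = g (X ω)) (h2 : ∀ ω, X ω = h (X' ω)) :
    entH p X = entH p X' := by
  have e1 : entH p X' ≤ entH p X := by
    have he : X' = fun ω => g (X ω) := funext h1
    rw [he]; exact entH_comp_le p hp X g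
  have e2 : entH p X ≤ entH p X' := by
    have he : X = fun ω => h (X' ω) := funext h2
    rw [he]; exact entH_comp_le p hp X' h
  linarith

lemma sum_filter_snd (f : α × β → ℝ) (b : β) :
    ∑ x ∈ univ.filter (fun x : α × β => x.2 = b), f x = ∑ a, f (a, b) := by
  rw [Finset.sum_filter, Fintype.sum_prod_type]
  refine Finset.sum_congr rfl fun a _ => ?_
  simp

lemma sum_filter_gsnd (g : β → γ) (f : α × β → ℝ) (c : γ) :
    ∑ x ∈ univ.filter (fun x : α × β => g x.2 = c), f x
      = ∑ b ∈ univ.filter (fun b => g b = c), ∑ a, f (a, b) := by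
  rw [Finset.sum_filter, Finset.sum_filter, Fintype.sum_prod_type_right]
  refine Finset.sum_congr rfl fun b _ => ?_
  split_ifs <;> simp

lemma sum_filter_pair_g (g : β → γ) (f : α × β → ℝ) (a : α) (c : γ) :
    ∑ x ∈ univ.filter (fun x : α × β => (x.1, g x.2) = (a, c)), f x
      = ∑ b ∈ univ.filter (fun b => g b = c), f (a, b) := by
  rw [Finset.sum_filter, Finset.sum_filter, Fintype.sum_prod_type_right]
  simp only [Prod.mk.injEq]
  refine Finset.sum_congr rfl fun b _ => ?_
  by_cases hb : g b = c
  · simp [hb]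
  · simp [hb]

lemma gibbs_submod {A B C : Type*} [Fintype A] [Fintype B] [Fintype C]
    [DecidableEq A] [DecidableEq B] [DecidableEq C]
    (q : A × B → ℝ) (hq : ∀ x, 0 ≤ q x) (hq1 : ∑ x, q x = 1) (g : B → C) :
    ∑ x, Real.negMulLog (q x)
      + ∑ c, Real.negMulLog (∑ b ∈ univ.filter (fun b => g b = c), ∑ a, q (a, b))
    ≤ (∑ x : A × C, Real.negMulLog (∑ b ∈ univ.filter (fun b => g b = x.2), q (x.1, b)))
      + ∑ b, Real.negMulLog (∑ a, q (a, b)) := by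
  classical
  set qB : B → ℝ := fun b => ∑ a, q (a, b) with hqBdef
  set m : C → ℝ := fun c => ∑ b ∈ univ.filter (fun b => g b = c), qB b with hmdef
  set n : A → C → ℝ := fun a c => ∑ b ∈ univ.filter (fun b => g b = c), q (a, b) with hndef
  have hqB0 : ∀ b, 0 ≤ qB b := fun b => Finset.sum_nonneg fun a _ => hq _
  have hm0 : ∀ c, 0 ≤ m c := fun c => Finset.sum_nonneg fun b _ => hqB0 b
  have hn0 : ∀ a c, 0 ≤ n a c := fun a c => Finset.sum_nonneg fun b _ => hq _
  have hbmem : ∀ b : B, b ∈ univ.filter (fun b' => g b' = g b) := by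
    intro b; simp
  have hq_le_qB : ∀ a b, q (a, b) ≤ qB b := by
    intro a b
    exact Finset.single_le_sum (f := fun a => q (a, b)) (fun a _ => hq _) (mem_univ a)
  have hq_le_n : ∀ a b, q (a, b) ≤ n a (g b) := by
    intro a b
    exact Finset.single_le_sum (f := fun b' => q (a, b')) (fun b' _ => hq _) (hbmem b)
  have hqB_le_m : ∀ b, qB b ≤ m (g b) := by
    intro b
    exact Finset.single_le_sum (f := fun b' => qB b') (fun b' _ => hqB0 _) (hbmem b)
  -- rewrite each entropy sum as a sum over A × B
  have e_m : ∑ c, Real.negMulLog (m c) = ∑ x : A × B, (-(q x * Real.log (m (g x.2)))) := by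
    have : ∀ c, Real.negMulLog (m c)
        = ∑ b ∈ univ.filter (fun b => g b = c), (-(qB b * Real.log (m (g b)))) := by
      intro c
      rw [Real.negMulLog, neg_mul, hmdef]
      simp only
      rw [Finset.sum_mul, ← Finset.sum_neg_distrib]
      refine Finset.sum_congr rfl fun b hb => ?_
      have : g b = c := (Finset.mem_filter.mp hb).2
      rw [this]
    rw [Finset.sum_congr rfl fun c _ => this c, Finset.sum_fiberwise]
    rw [Fintype.sum_prod_type_right]
    refine Finset.sum_congr rfl fun b _ => ?_
    rw [hqBdef]
    simp only
    rw [Finset.sum_mul, ← Finset.sum_neg_distrib]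
  have e_n : ∑ x : A × C, Real.negMulLog (n x.1 x.2)
      = ∑ x : A × B, (-(q x * Real.log (n x.1 (g x.2)))) := by
    rw [Fintype.sum_prod_type, Fintype.sum_prod_type]
    refine Finset.sum_congr rfl fun a _ => ?_
    have : ∀ c, Real.negMulLog (n a c)
        = ∑ b ∈ univ.filter (fun b => g b = c), (-(q (a, b) * Real.log (n a (g b)))) := by
      intro c
      rw [Real.negMulLog, neg_mul, hndef]
      simp only
      rw [Finset.sum_mul, ← Finset.sum_neg_distrib]
      refine Finset.sum_congr rfl fun b hb => ?_
      have : g b = c := (Finset.mem_filter.mp hb).2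
      rw [this]
    rw [Finset.sum_congr rfl fun c _ => this c, Finset.sum_fiberwise]
  have e_qB : ∑ b, Real.negMulLog (qB b) = ∑ x : A × B, (-(q x * Real.log (qB x.2))) := by
    rw [Fintype.sum_prod_type_right]
    refine Finset.sum_congr rfl fun b _ => ?_
    rw [Real.negMulLog, neg_mul, hqBdef]
    simp only
    rw [Finset.sum_mul, ← Finset.sum_neg_distrib]
  have e_q : ∑ x : A × B, Real.negMulLog (q x) = ∑ x : A × B, (-(q x * Real.log (q x))) := by
    simp [Real.negMulLog, neg_mul]
  -- the combined sum
  rw [show (∑ x : A × C, Real.negMulLog (∑ b ∈ univ.filter (fun b => g b = x.2), q (x.1, b)))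
      = ∑ x : A × C, Real.negMulLog (n x.1 x.2) from rfl]
  rw [e_q, e_m, e_n, e_qB]
  rw [← Finset.sum_add_distrib, ← Finset.sum_add_distrib, ← sub_nonneg, ← Finset.sum_sub_distrib]
  have key : ∀ x : A × B,
      (-(q x * Real.log (n x.1 (g x.2))) + -(q x * Real.log (qB x.2)))
        - (-(q x * Real.log (q x)) + -(q x * Real.log (m (g x.2))))
      = q x * (Real.log (q x) + Real.log (m (g x.2))
                - Real.log (n x.1 (g x.2)) - Real.log (qB x.2)) := by
    intro x; ring
  rw [Finset.sum_congr rfl fun x _ => key x]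
  rw [← neg_nonpos, ← Finset.sum_neg_distrib]
  have key2 : ∀ x : A × B,
      -(q x * (Real.log (q x) + Real.log (m (g x.2))
                - Real.log (n x.1 (g x.2)) - Real.log (qB x.2)))
      = q x * (Real.log (n x.1 (g x.2)) + Real.log (qB x.2)
                - Real.log (q x) - Real.log (m (g x.2))) := by
    intro x; ring
  rw [Finset.sum_congr rfl fun x _ => key2 x]
  -- restrict to the support
  set t : A × B → ℝ := fun x => n x.1 (g x.2) * qB x.2 / (q x * m (g x.2)) with htdef
  set S : Finset (A × B) := univ.filter (fun x => q x ≠ 0) with hSdef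
  have hSsum : ∑ x ∈ S, q x = 1 := by rw [hSdef, Finset.sum_filter_ne_zero]; exact hq1
  have hpos : ∀ x ∈ S, 0 < q x := by
    intro x hx
    have : q x ≠ 0 := (Finset.mem_filter.mp hx).2
    exact lt_of_le_of_ne (hq x) (Ne.symm this)
  have htpos : ∀ x ∈ S, 0 < t x := by
    intro x hx
    have h1 := hpos x hx
    have h2 : 0 < n x.1 (g x.2) := lt_of_lt_of_le h1 (hq_le_n x.1 x.2)
    have h3 : 0 < qB x.2 := lt_of_lt_of_le h1 (hq_le_qB x.1 x.2)
    have h4 : 0 < m (g x.2) := lt_of_lt_of_le h3 (hqB_le_m x.2)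
    exact div_pos (mul_pos h2 h3) (mul_pos h1 h4)
  have hrestrict : ∑ x : A × B, q x * (Real.log (n x.1 (g x.2)) + Real.log (qB x.2)
                - Real.log (q x) - Real.log (m (g x.2)))
      = ∑ x ∈ S, q x * Real.log (t x) := by
    rw [hSdef]
    rw [← Finset.sum_filter_of_ne (p := fun x => q x ≠ 0)]
    · refine Finset.sum_congr rfl fun x hx => ?_
      have h1 : 0 < q x :=
        lt_of_le_of_ne (hq x) (Ne.symm (Finset.mem_filter.mp hx).2)
      have h2 : 0 < n x.1 (g x.2) := lt_of_lt_of_le h1 (hq_le_n x.1 x.2)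
      have h3 : 0 < qB x.2 := lt_of_lt_of_le h1 (hq_le_qB x.1 x.2)
      have h4 : 0 < m (g x.2) := lt_of_lt_of_le h3 (hqB_le_m x.2)
      rw [htdef]
      simp only
      rw [Real.log_div (by positivity) (by positivity), Real.log_mul h2.ne' h3.ne',
        Real.log_mul h1.ne' h4.ne']
      ring
    · intro x _ hne h
      exact hne (by rw [h, zero_mul])
  rw [hrestrict]
  -- Jensen
  have jensen : ∑ x ∈ S, q x * Real.log (t x) ≤ Real.log (∑ x ∈ S, q x * t x) := by
    have := (strictConcaveOn_log_Ioi.concaveOn).le_map_sum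
      (t := S) (w := fun x => q x) (p := t)
      (fun x hx => (hpos x hx).le) hSsum (fun x hx => htpos x hx)
    simpa [smul_eq_mul] using this
  have hsum_t_le : ∑ x ∈ S, q x * t x ≤ 1 := by
    have h1 : ∀ x ∈ S, q x * t x = n x.1 (g x.2) * qB x.2 / m (g x.2) := by
      intro x hx
      have hq0 := (hpos x hx).ne'
      have hm0' : m (g x.2) ≠ 0 := by
        have h3 : 0 < qB x.2 := lt_of_lt_of_le (hpos x hx) (hq_le_qB x.1 x.2)
        exact (lt_of_lt_of_le h3 (hqB_le_m x.2)).ne'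
      rw [htdef]
      simp only
      field_simp
    rw [Finset.sum_congr rfl h1]
    have h2 : ∑ x ∈ S, n x.1 (g x.2) * qB x.2 / m (g x.2)
        ≤ ∑ x : A × B, n x.1 (g x.2) * qB x.2 / m (g x.2) := by
      apply Finset.sum_le_sum_of_subset_of_nonneg (Finset.filter_subset _ _)
      intro x _ _
      exact div_nonneg (mul_nonneg (hn0 _ _) (hqB0 _)) (hm0 _)
    refine le_trans h2 ?_
    have hmn : ∀ c, ∑ a, n a c = m c := by
      intro c
      rw [hmdef, hndef]
      simp only
      rw [Finset.sum_comm]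
    have h3 : ∑ x : A × B, n x.1 (g x.2) * qB x.2 / m (g x.2)
        = ∑ b, (∑ a, n a (g b)) * qB b / m (g b) := by
      rw [Fintype.sum_prod_type_right]
      refine Finset.sum_congr rfl fun b _ => ?_
      simp only [Finset.sum_div, Finset.sum_mul]
    rw [h3]
    have h4 : ∀ b : B, (∑ a, n a (g b)) * qB b / m (g b) ≤ qB b := by
      intro b
      rw [hmn (g b)]
      rcases eq_or_lt_of_le (hm0 (g b)) with h0 | h0
      · rw [← h0, zero_mul, zero_div]; exact hqB0 b
      · rw [mul_comm, mul_div_assoc, div_self h0.ne', mul_one]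
    refine le_trans (Finset.sum_le_sum fun b _ => h4 b) ?_
    have : ∑ b, qB b = 1 := by
      rw [hqBdef]
      simp only
      rw [← Fintype.sum_prod_type_right]
      exact hq1
    rw [this]
  have hlog : Real.log (∑ x ∈ S, q x * t x) ≤ 0 := by
    apply Real.log_nonpos
    · exact Finset.sum_nonneg fun x hx => mul_nonneg (hq x) (htpos x hx).le
    · exact hsum_t_le
  linarith

lemma condH_comp_right_le (hp : ∀ ω, 0 ≤ p ω) (hp1 : ∑ ω, p ω = 1)
    (X : Ω → α) (Y : Ω → β) (g : β → γ) :
    condH p X Y ≤ condH p X (fun ω => g (Y ω)) := by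
  classical
  set q : α × β → ℝ := pmfProb p (fun ω => (X ω, Y ω)) with hqdef
  have hq : ∀ x, 0 ≤ q x := fun x => pmfProb_nonneg p hp _ x
  have hq1 : ∑ x, q x = 1 := by rw [hqdef, sum_pmfProb]; exact hp1
  have key := gibbs_submod q hq hq1 g
  unfold condH entH
  have T2 : ∀ b, pmfProb p Y b = ∑ a, q (a, b) := by
    intro b
    have he : pmfProb p Y b = pmfProb p (fun ω => Prod.snd ((X ω, Y ω))) b := rfl
    rw [he, pmfProb_comp p (fun ω => (X ω, Y ω)) Prod.snd b, sum_filter_snd]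
  have T3 : ∀ z : α × γ, pmfProb p (fun ω => (X ω, g (Y ω))) z
      = ∑ b ∈ univ.filter (fun b => g b = z.2), q (z.1, b) := by
    intro z
    have he : pmfProb p (fun ω => (X ω, g (Y ω))) z
        = pmfProb p (fun ω => ((fun x : α × β => (x.1, g x.2)) ((X ω, Y ω)))) z := rfl
    rw [he, pmfProb_comp p (fun ω => (X ω, Y ω)) (fun x : α × β => (x.1, g x.2)) z]
    exact sum_filter_pair_g g q z.1 z.2
  have T4 : ∀ c, pmfProb p (fun ω => g (Y ω)) c
      = ∑ b ∈ univ.filter (fun b => g b = c), ∑ a, q (a, b) := by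
    intro c
    have he : pmfProb p (fun ω => g (Y ω)) c
        = pmfProb p (fun ω => (fun x : α × β => g x.2) ((X ω, Y ω))) c := rfl
    rw [he, pmfProb_comp p (fun ω => (X ω, Y ω)) (fun x : α × β => g x.2) c]
    exact sum_filter_gsnd g q c
  have e1 : ∑ x, Real.negMulLog (pmfProb p (fun ω => (X ω, Y ω)) x)
      = ∑ x, Real.negMulLog (q x) := rfl
  have e2 : ∑ b, Real.negMulLog (pmfProb p Y b)
      = ∑ b, Real.negMulLog (∑ a, q (a, b)) :=
    Finset.sum_congr rfl fun b _ => by rw [T2]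
  have e3 : ∑ z : α × γ, Real.negMulLog (pmfProb p (fun ω => (X ω, g (Y ω))) z)
      = ∑ z : α × γ, Real.negMulLog (∑ b ∈ univ.filter (fun b => g b = z.2), q (z.1, b)) :=
    Finset.sum_congr rfl fun z _ => by rw [T3]
  have e4 : ∑ c, Real.negMulLog (pmfProb p (fun ω => g (Y ω)) c)
      = ∑ c, Real.negMulLog (∑ b ∈ univ.filter (fun b => g b = c), ∑ a, q (a, b)) :=
    Finset.sum_congr rfl fun c _ => by rw [T4]
  rw [e1, e2, e3, e4]
  linarith

lemma condH_congr_right (hp : ∀ ω, 0 ≤ p ω) (X : Ω → α) (Y : Ω → β) (Y' : Ω → γ)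
    (g : β → γ) (h : γ → β) (h3 : ∀ ω, Y' ω = g (Y ω)) (h4 : ∀ ω, Y ω = h (Y' ω)) :
    condH p X Y = condH p X Y' := by
  unfold condH
  have e1 : entH p (fun ω => (X ω, Y ω)) = entH p (fun ω => (X ω, Y' ω)) :=
    entH_eq_of_inv p hp _ _ (fun z => (z.1, g z.2)) (fun z => (z.1, h z.2))
      (fun ω => by rw [Prod.mk.injEq]; exact ⟨rfl, h3 ω⟩)
      (fun ω => by rw [Prod.mk.injEq]; exact ⟨rfl, h4 ω⟩)
  have e2 : entH p Y = entH p Y' := entH_eq_of_inv p hp Y Y' g h h3 h4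
  rw [e1, e2]

lemma condH_congr_left_joint (hp : ∀ ω, 0 ≤ p ω) (X : Ω → α) (X' : Ω → γ) (Y : Ω → β)
    (g : α × β → γ) (h : γ × β → α)
    (h1 : ∀ ω, X' ω = g (X ω, Y ω)) (h2 : ∀ ω, X ω = h (X' ω, Y ω)) :
    condH p X Y = condH p X' Y := by
  unfold condH
  have e1 : entH p (fun ω => (X ω, Y ω)) = entH p (fun ω => (X' ω, Y ω)) :=
    entH_eq_of_inv p hp _ _ (fun z => (g z, z.2)) (fun z => (h z, z.2))
      (fun ω => by rw [Prod.mk.injEq]; exact ⟨h1 ω, rfl⟩)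
      (fun ω => by rw [Prod.mk.injEq]; exact ⟨h2 ω, rfl⟩)
  rw [e1]

lemma condH_chain (hp : ∀ ω, 0 ≤ p ω) (X : Ω → α) (X' : Ω → β) (Y : Ω → γ) :
    condH p (fun ω => (X ω, X' ω)) Y
      = condH p X' Y + condH p X (fun ω => (X' ω, Y ω)) := by
  unfold condH
  have e : entH p (fun ω => ((X ω, X' ω), Y ω)) = entH p (fun ω => (X ω, (X' ω, Y ω))) :=
    entH_eq_of_inv p hp _ _ (fun z => (z.1.1, (z.1.2, z.2))) (fun z => ((z.1, z.2.1), z.2.2))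
      (fun ω => rfl) (fun ω => rfl)
  rw [e]; ring

lemma condH_nonneg (hp : ∀ ω, 0 ≤ p ω) (X : Ω → α) (Y : Ω → β) : 0 ≤ condH p X Y := by
  have h := entH_comp_le p hp (fun ω => (X ω, Y ω)) Prod.snd
  have he : entH p (fun ω => Prod.snd ((X ω, Y ω))) = entH p Y := rfl
  rw [he] at h
  unfold condH
  linarith

lemma condH_comp_left_le (hp : ∀ ω, 0 ≤ p ω) (X : Ω → α) (Y : Ω → β) (g : α → γ) :
    condH p (fun ω => g (X ω)) Y ≤ condH p X Y := by
  unfold condH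
  have h := entH_comp_le p hp (fun ω => (X ω, Y ω)) (fun z => (g z.1, z.2))
  have he : entH p (fun ω => ((fun z : α × β => (g z.1, z.2)) ((X ω, Y ω))))
      = entH p (fun ω => (g (X ω), Y ω)) := rfl
  rw [he] at h
  linarith

lemma condH_le_pair_left (hp : ∀ ω, 0 ≤ p ω) (X : Ω → α) (X' : Ω → β) (Y : Ω → γ) :
    condH p X Y ≤ condH p (fun ω => (X ω, X' ω)) Y := by
  have h := condH_comp_left_le p hp (fun ω => (X ω, X' ω)) Y Prod.fst
  exact h

lemma condH_pair_le_fst (hp : ∀ ω, 0 ≤ p ω) (hp1 : ∑ ω, p ω = 1)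
    (X : Ω → α) (Y : Ω → β) (Z : Ω → γ) :
    condH p X (fun ω => (Y ω, Z ω)) ≤ condH p X Y := by
  have h := condH_comp_right_le p hp hp1 X (fun ω => (Y ω, Z ω)) Prod.fst
  exact h

lemma condH_pair_le_snd (hp : ∀ ω, 0 ≤ p ω) (hp1 : ∑ ω, p ω = 1)
    (X : Ω → α) (Y : Ω → β) (Z : Ω → γ) :
    condH p X (fun ω => (Y ω, Z ω)) ≤ condH p X Z := by
  have h := condH_comp_right_le p hp hp1 X (fun ω => (Y ω, Z ω)) Prod.snd
  exact h

lemma entH_unit (hp1 : ∑ ω, p ω = 1) : entH p (fun _ : Ω => (0 : Fin 1)) = 0 := by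
  unfold entH pmfProb
  rw [Fin.sum_univ_one]
  have he : ∀ ω : Ω, (if (0 : Fin 1) = (0 : Fin 1) then p ω else 0) = p ω := by
    intro ω; simp
  rw [Finset.sum_congr rfl fun ω _ => he ω, hp1]
  simp

lemma condH_le_entH (hp : ∀ ω, 0 ≤ p ω) (hp1 : ∑ ω, p ω = 1) (X : Ω → α) (Y : Ω → β) :
    condH p X Y ≤ entH p X := by
  have h := condH_comp_right_le p hp hp1 X Y (fun _ => (0 : Fin 1))
  have h2 : condH p X (fun _ : Ω => (0 : Fin 1)) = entH p X := by
    unfold condH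
    have e1 : entH p (fun ω => (X ω, (0 : Fin 1))) = entH p X :=
      entH_eq_of_inv p hp _ _ Prod.fst (fun a => (a, 0)) (fun ω => rfl) (fun ω => rfl)
    rw [e1, entH_unit p hp1, sub_zero]
  rw [h2] at h
  exact h

lemma entH_le_log_card (hp : ∀ ω, 0 ≤ p ω) (hp1 : ∑ ω, p ω = 1) (X : Ω → α) :
    entH p X ≤ Real.log (Fintype.card α) := by
  have hΩ : Nonempty Ω := by
    by_contra h
    rw [not_nonempty_iff] at h
    rw [Finset.univ_eq_empty, Finset.sum_empty] at hp1
    exact one_ne_zero hp1.symm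
  have hα : Nonempty α := ⟨X (Classical.arbitrary Ω)⟩
  have hcard : 0 < Fintype.card α := Fintype.card_pos
  set n : ℕ := Fintype.card α with hn
  have jensen := Real.concaveOn_negMulLog.le_map_sum (t := (univ : Finset α))
    (w := fun _ => (n : ℝ)⁻¹) (p := pmfProb p X)
    (fun _ _ => by positivity)
    (by rw [Finset.sum_const, card_univ, ← hn, nsmul_eq_mul]
        field_simp)
    (fun x _ => pmfProb_nonneg p hp X x)
  have hsum : ∑ x, (n : ℝ)⁻¹ • pmfProb p X x = (n : ℝ)⁻¹ := by
    rw [← Finset.smul_sum, sum_pmfProb, hp1, smul_eq_mul, mul_one]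
  rw [hsum] at jensen
  have hinv : Real.negMulLog ((n : ℝ)⁻¹) = (n : ℝ)⁻¹ * Real.log n := by
    rw [Real.negMulLog, Real.log_inv]; ring
  rw [hinv] at jensen
  have hmain : entH p X = ∑ x, Real.negMulLog (pmfProb p X x) := rfl
  have hfact : ∑ x, (n:ℝ)⁻¹ • Real.negMulLog (pmfProb p X x)
      = (n:ℝ)⁻¹ * entH p X := by
    rw [hmain, ← Finset.smul_sum, smul_eq_mul]
  rw [hfact] at jensen
  have hnpos : (0:ℝ) < n := by exact_mod_cast hcard
  calc entH p X = (n:ℝ) * ((n:ℝ)⁻¹ * entH p X) := by field_simp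
    _ ≤ (n:ℝ) * ((n:ℝ)⁻¹ * Real.log n) := by
        apply mul_le_mul_of_nonneg_left jensen hnpos.le
    _ = Real.log n := by field_simp

lemma condH_tuple_le_sum {ι : Type*} [DecidableEq ι] [Fintype ι]
    (hp : ∀ ω, 0 ≤ p ω) (hp1 : ∑ ω, p ω = 1)
    (U : ι → Ω → α) (C : Ω → γ) (u : Finset ι) :
    condH p (fun ω (i : ↥u) => U i.1 ω) C ≤ ∑ i ∈ u, condH p (U i) C := by
  classical
  induction u using Finset.induction_on with
  | empty =>
    rw [Finset.sum_empty]
    have e : condH p (fun ω (i : ↥(∅ : Finset ι)) => U i.1 ω) C = 0 := by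
      unfold condH
      have e1 : entH p (fun ω => ((fun i : ↥(∅ : Finset ι) => U i.1 ω), C ω)) = entH p C :=
        entH_eq_of_inv p hp _ _ Prod.snd
          (fun c => ((fun i : ↥(∅ : Finset ι) => absurd i.2 (Finset.notMem_empty i.1)), c))
          (fun ω => rfl)
          (fun ω => by
            rw [Prod.mk.injEq]
            refine ⟨funext fun i => ?_, rfl⟩
            exact absurd i.2 (Finset.notMem_empty i.1))
      rw [e1, sub_self]
    rw [e]
  | @insert a u ha ih =>
    have step1 : condH p (fun ω (i : ↥(insert a u)) => U i.1 ω) C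
        = condH p (fun ω => (U a ω, fun i : ↥u => U i.1 ω)) C := by
      apply condH_congr_left_joint p hp _ _ C
        (g := fun (z : ((↥(insert a u)) → α) × γ) => (z.1 ⟨a, Finset.mem_insert_self a u⟩,
          fun i : ↥u => z.1 ⟨i.1, Finset.mem_insert_of_mem i.2⟩))
        (h := fun (z : (α × ((↥u) → α)) × γ) (j : ↥(insert a u)) =>
          if hj : j.1 ∈ u then z.1.2 ⟨j.1, hj⟩ else z.1.1)
      · intro ω; rfl
      · intro ω
        funext j
        dsimp only
        split
        · rfl
        · rename_i hj
          have : j.1 = a := by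
            rcases Finset.mem_insert.mp j.2 with h | h
            · exact h
            · exact absurd h hj
          rw [this]
    rw [step1, condH_chain p hp (U a) (fun ω (i : ↥u) => U i.1 ω) C,
      Finset.sum_insert ha]
    have step2 : condH p (U a) (fun ω => ((fun i : ↥u => U i.1 ω), C ω))
        ≤ condH p (U a) C := condH_pair_le_snd p hp hp1 (U a) _ C
    have := ih
    linarith

lemma han_step {k : ℕ} (hp : ∀ ω, 0 ≤ p ω) (hp1 : ∑ ω, p ω = 1)
    (V : Fin k → Ω → α) (W : Ω → γ) (hk : 1 ≤ k) (r : ℕ) (hr : r ≤ k) :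
    ∃ s : Finset (Fin k), s.card = r ∧
      condH p (fun ω (i : Fin k) => V i ω) (fun ω => (W ω, fun i : ↥s => V i.1 ω))
        ≤ (((k : ℝ) - r) / k) * condH p (fun ω (i : Fin k) => V i ω) W := by
  classical
  have hk0 : ((k : ℝ)) ≠ 0 := by positivity
  induction r with
  | zero =>
    refine ⟨∅, Finset.card_empty, ?_⟩
    have e : condH p (fun ω (i : Fin k) => V i ω)
        (fun ω => (W ω, fun i : ↥(∅ : Finset (Fin k)) => V i.1 ω))
        = condH p (fun ω (i : Fin k) => V i ω) W := by
      apply condH_congr_right p hp _ _ _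
        (g := Prod.fst)
        (h := fun w => (w, fun i : ↥(∅ : Finset (Fin k)) => absurd i.2 (Finset.notMem_empty i.1)))
      · intro ω; rfl
      · intro ω
        rw [Prod.mk.injEq]
        refine ⟨rfl, funext fun i => ?_⟩
        exact absurd i.2 (Finset.notMem_empty i.1)
    rw [e]
    simp [div_self hk0]
  | succ r ih =>
    obtain ⟨s, hcard, hbound⟩ := ih (Nat.le_of_succ_le hr)
    have hrk : r < k := hr
    have hcompl_card : sᶜ.card = k - r := by
      rw [Finset.card_compl, hcard]; simp
    have hcompl_pos : 0 < sᶜ.card := by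
      rw [hcompl_card]; omega
    have hkr : (0:ℝ) < (k : ℝ) - r := by
      have : (r : ℝ) < k := by exact_mod_cast hrk
      linarith
    set F := fun ω (i : Fin k) => V i ω with hF
    set C := fun ω => (W ω, fun i : ↥s => V i.1 ω) with hC
    have hsub0 : condH p F C = condH p (fun ω (i : ↥sᶜ) => V i.1 ω) C := by
      apply condH_congr_left_joint p hp _ _ C
        (g := fun (z : (Fin k → α) × (γ × (↥s → α))) (i : ↥sᶜ) => z.1 i.1)
        (h := fun (z : (↥sᶜ → α) × (γ × (↥s → α))) (j : Fin k) =>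
          if hj : j ∈ s then z.2.2 ⟨j, hj⟩ else z.1 ⟨j, Finset.mem_compl.mpr hj⟩)
      · intro ω; rfl
      · intro ω
        funext j
        dsimp only
        split <;> rfl
    have hsub : condH p (fun ω (i : ↥sᶜ) => V i.1 ω) C ≤ ∑ i ∈ sᶜ, condH p (V i) C :=
      condH_tuple_le_sum p hp hp1 V C sᶜ
    have hex : ∃ i ∈ sᶜ, condH p F C / ((k:ℝ) - r) ≤ condH p (V i) C := by
      by_contra hcon
      push_neg at hcon
      have hlt : ∑ i ∈ sᶜ, condH p (V i) C
          < ∑ i ∈ sᶜ, condH p F C / ((k:ℝ) - r) := by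
        apply Finset.sum_lt_sum_of_nonempty (Finset.card_pos.mp hcompl_pos)
        intro i hi
        exact hcon i hi
      rw [Finset.sum_const] at hlt
      have hcc : (sᶜ.card : ℝ) = (k:ℝ) - r := by
        rw [hcompl_card, Nat.cast_sub (Nat.le_of_succ_le hr)]
      rw [nsmul_eq_mul, hcc] at hlt
      rw [mul_div_cancel₀ _ hkr.ne'] at hlt
      rw [← hsub0] at hsub
      linarith
    obtain ⟨i, his, hie⟩ := hex
    have hins : i ∉ s := Finset.mem_compl.mp his
    refine ⟨insert i s, by rw [Finset.card_insert_of_notMem hins, hcard], ?_⟩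
    -- chain rule step
    have hchain := condH_chain p hp F (V i) C
    have hL : condH p (fun ω => (F ω, V i ω)) C = condH p F C := by
      apply condH_congr_left_joint p hp _ _ C
        (g := fun (z : ((Fin k → α) × α) × (γ × (↥s → α))) => z.1.1)
        (h := fun (z : (Fin k → α) × (γ × (↥s → α))) => (z.1, z.1 i))
      · intro ω; rfl
      · intro ω; rfl
    have hR : condH p F (fun ω => (V i ω, C ω))
        = condH p F (fun ω => (W ω, fun j : ↥(insert i s) => V j.1 ω)) := by
      apply condH_congr_right p hp F _ _
        (g := fun z => (z.2.1, fun j : ↥(insert i s) =>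
          if hj : j.1 ∈ s then z.2.2 ⟨j.1, hj⟩ else z.1))
        (h := fun z => (z.2 ⟨i, Finset.mem_insert_self i s⟩,
          (z.1, fun j : ↥s => z.2 ⟨j.1, Finset.mem_insert_of_mem j.2⟩)))
      · intro ω
        rw [Prod.mk.injEq]
        refine ⟨rfl, funext fun j => ?_⟩
        dsimp only
        split
        · rfl
        · rename_i hj
          have : j.1 = i := by
            rcases Finset.mem_insert.mp j.2 with h | h
            · exact h
            · exact absurd h hj
          rw [this]
      · intro ω; rfl
    have hkey : condH p F (fun ω => (W ω, fun j : ↥(insert i s) => V j.1 ω))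
        = condH p F C - condH p (V i) C := by
      rw [← hR]
      rw [hL] at hchain
      linarith
    rw [hkey]
    have hD0 : 0 ≤ condH p F C := condH_nonneg p hp F C
    have harith : condH p F C - condH p (V i) C
        ≤ condH p F C * (((k:ℝ) - r - 1) / ((k:ℝ) - r)) := by
      have h1 : condH p F C / ((k:ℝ) - r) ≤ condH p (V i) C := hie
      have : condH p F C - condH p (V i) C ≤ condH p F C - condH p F C / ((k:ℝ) - r) := by
        linarith
      calc condH p F C - condH p (V i) C
          ≤ condH p F C - condH p F C / ((k:ℝ) - r) := this
        _ = condH p F C * (((k:ℝ) - r - 1) / ((k:ℝ) - r)) := by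
            field_simp
    have hfac : (0:ℝ) ≤ ((k:ℝ) - r - 1) / ((k:ℝ) - r) := by
      apply div_nonneg _ hkr.le
      have : ((r:ℝ) + 1) ≤ k := by exact_mod_cast hr
      linarith
    calc condH p F C - condH p (V i) C
        ≤ condH p F C * (((k:ℝ) - r - 1) / ((k:ℝ) - r)) := harith
      _ ≤ (((k:ℝ) - r) / k * condH p F W) * (((k:ℝ) - r - 1) / ((k:ℝ) - r)) := by
          apply mul_le_mul_of_nonneg_right _ hfac
          exact hbound
      _ = (((k:ℝ) - ((r+1 : ℕ) : ℝ)) / k) * condH p F W := by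
          push_cast
          field_simp
          ring

end Toolkit
def fcast {σ : ℕ → Sort*} {a b : ℕ} (h : a = b) (f : σ b) : σ a := h ▸ f

lemma ZZ_split {Ω α μ' : Type*} [Fintype Ω] [Fintype α] [DecidableEq α] [Fintype μ']
    [DecidableEq μ'] (p : Ω → ℝ) (hp : ∀ ω, 0 ≤ p ω) (c : ℕ) (k : ℕ → ℕ)
    (Y : (j : ℕ) → Fin (k j) → Ω → α) (X : Ω → μ')
    (s s' : (j : ℕ) → Finset (Fin (k j))) (t : ℕ) (ht : t ∈ Finset.Icc 1 c)
    (u : Finset (Fin (k t))) (hagree : ∀ j, j ≠ t → s' j = s j) (hst' : s' t = u)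
    (hst : s t ⊆ u) :
    condH p X (fun ω (j : ↥(Finset.Icc 1 c)) (i : ↥(s' j.1)) => Y j.1 i.1 ω)
      = condH p X (fun ω => ((fun (j : ↥(Finset.Icc 1 c)) (i : ↥(s j.1)) => Y j.1 i.1 ω),
          (fun i : ↥u => Y t i.1 ω))) := by
  classical
  have hsub : ∀ (j : ↥(Finset.Icc 1 c)) (x : Fin (k j.1)), x ∈ s j.1 → x ∈ s' j.1 := by
    rintro ⟨jv, hjv⟩ x hx
    dsimp only at hx ⊢
    by_cases hj : jv = t
    · subst hj
      rw [hst']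
      exact hst hx
    · rw [hagree jv hj]
      exact hx
  apply condH_congr_right p hp X _ _
    (g := fun (F : (j : ↥(Finset.Icc 1 c)) → ↥(s' j.1) → α) =>
      ((fun j (i : ↥(s j.1)) => F j ⟨i.1, hsub j i.1 i.2⟩),
       (fun i : ↥u => F ⟨t, ht⟩ ⟨i.1, by rw [hst']; exact i.2⟩)))
    (h := fun (z : ((j : ↥(Finset.Icc 1 c)) → ↥(s j.1) → α) × (↥u → α))
        (j : ↥(Finset.Icc 1 c)) =>
      if hj : j.1 = t then fcast (σ := fun jv => ↥(s' jv) → α) hj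
        (fun i : ↥(s' t) => z.2 ⟨i.1, by rw [← hst']; exact i.2⟩)
      else fun i : ↥(s' j.1) => z.1 j ⟨i.1, by rw [← hagree j.1 hj]; exact i.2⟩)
  · intro ω; rfl
  · intro ω
    funext j
    dsimp only
    split
    · rename_i hj
      rcases j with ⟨jv, hjv⟩
      dsimp only at hj ⊢
      subst hj
      rfl
    · rfl

/-- paper's Theorem 4, condition (C2): relay network with `c` layers and no
intermediate randomness. Layer `j` (for `j = 1,…,c`) carries edge variables
`Y j 1, …, Y j (k j)` with values in an alphabet of size `d`; each layer is a
deterministic function of the previous layer, and the message `M` is decodable from the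
last layer. Then there is a tuple of eavesdropped edge sets `s j ⊆ {1,…,k j}` with
`|s j| = r j` such that
`I(M ; (Y_{j,i})_{j,i∈s j}) ≥ H(M) - log d * min_j (k j - r j) ∏_{i=j+1}^c (k i - r i)/(k i)`. -/
theorem relay_network_leak_lower_bound {Ω α μ : Type*} [Fintype Ω] [Fintype α]
    [DecidableEq α] [Fintype μ] [DecidableEq μ]
    (p : Ω → ℝ) (hp : ∀ ω, 0 ≤ p ω) (hp1 : ∑ ω, p ω = 1)
    (c d : ℕ) (hc : 1 ≤ c) (hd : 1 ≤ d) (hα : Fintype.card α = d)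
    (k r : ℕ → ℕ) (hk : ∀ j ∈ Finset.Icc 1 c, 1 ≤ k j)
    (hr : ∀ j ∈ Finset.Icc 1 c, r j ≤ k j)
    (Y : (j : ℕ) → Fin (k j) → Ω → α) (M : Ω → μ)
    (hdet : ∀ j, 2 ≤ j → j ≤ c →
      condH p (fun ω (i : Fin (k j)) => Y j i ω)
        (fun ω (i : Fin (k (j - 1))) => Y (j - 1) i ω) = 0)
    (hdec : condH p M (fun ω (i : Fin (k c)) => Y c i ω) = 0) :
    ∃ s : (j : ℕ) → Finset (Fin (k j)),
      (∀ j ∈ Finset.Icc 1 c, (s j).card = r j) ∧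
      entH p M - Real.log d *
          (Finset.Icc 1 c).inf' (Finset.nonempty_Icc.mpr hc)
            (fun j => ((k j : ℝ) - (r j : ℝ)) *
              ∏ i ∈ Finset.Icc (j + 1) c, ((k i : ℝ) - (r i : ℝ)) / (k i : ℝ))
        ≤ mutInfo p M
            (fun ω (j : ↥(Finset.Icc 1 c)) (i : ↥(s j.1)) => Y j.1 i.1 ω) := by
  classical
  obtain ⟨j₀, hj₀mem, hj₀eq⟩ := Finset.exists_mem_eq_inf' (Finset.nonempty_Icc.mpr hc)
    (fun j => ((k j : ℝ) - (r j : ℝ)) *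
      ∏ i ∈ Finset.Icc (j + 1) c, ((k i : ℝ) - (r i : ℝ)) / (k i : ℝ))
  have hj₀1 : 1 ≤ j₀ := (Finset.mem_Icc.mp hj₀mem).1
  have hj₀c : j₀ ≤ c := (Finset.mem_Icc.mp hj₀mem).2
  have hinit : ∀ j : ℕ, ∃ u : Finset (Fin (k j)), j ∈ Finset.Icc 1 c → u.card = r j := by
    intro j
    by_cases hj : j ∈ Finset.Icc 1 c
    · obtain ⟨u, _, hu⟩ := Finset.exists_subset_card_eq
        (s := (Finset.univ : Finset (Fin (k j)))) (n := r j)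
        (by rw [Finset.card_univ, Fintype.card_fin]; exact hr j hj)
      exact ⟨u, fun _ => hu⟩
    · exact ⟨∅, fun h => absurd h hj⟩
  choose u0 hu0 using hinit
  set sinit : (j : ℕ) → Finset (Fin (k j)) := fun j => if j₀ ≤ j then ∅ else u0 j with hsinit
  have main : ∀ t, j₀ ≤ t → t ≤ c → ∃ s : (j : ℕ) → Finset (Fin (k j)),
      (∀ j ∈ Finset.Icc 1 c, j ≤ t → (s j).card = r j) ∧
      (∀ j, t < j → s j = ∅) ∧
      condH p (fun ω (i : Fin (k t)) => Y t i ω)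
          (fun ω (j : ↥(Finset.Icc 1 c)) (i : ↥(s j.1)) => Y j.1 i.1 ω)
        ≤ Real.log d * (((k j₀ : ℝ) - (r j₀ : ℝ)) *
            ∏ i ∈ Finset.Icc (j₀ + 1) t, ((k i : ℝ) - (r i : ℝ)) / (k i : ℝ)) := by
    intro t ht
    induction t, ht using Nat.le_induction with
    | base =>
      intro _
      obtain ⟨u, hucard, hubd⟩ := han_step p hp hp1 (Y j₀)
        (fun ω (j : ↥(Finset.Icc 1 c)) (i : ↥(sinit j.1)) => Y j.1 i.1 ω)
        (hk j₀ hj₀mem) (r j₀) (hr j₀ hj₀mem)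
      set s1 : (j : ℕ) → Finset (Fin (k j)) :=
        fun j => if hj : j = j₀ then hj ▸ u else sinit j with hs1
      have hs1j₀ : s1 j₀ = u := by rw [hs1]; simp
      have hagree : ∀ j, j ≠ j₀ → s1 j = sinit j := by
        intro j hj; rw [hs1]; simp [hj]
      have hsinitj₀ : sinit j₀ = ∅ := by simp [hsinit]
      have hsplit := ZZ_split p hp c k Y (fun ω (i : Fin (k j₀)) => Y j₀ i ω)
        sinit s1 j₀ hj₀mem u hagree hs1j₀ (by rw [hsinitj₀]; exact Finset.empty_subset u)
      refine ⟨s1, ?_, ?_, ?_⟩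
      · intro j hj hjle
        by_cases hjj : j = j₀
        · subst hjj; rw [hs1j₀]; exact hucard
        · rw [hagree j hjj]
          have hlt : ¬ j₀ ≤ j := by omega
          simp only [hsinit]
          rw [if_neg hlt]
          exact hu0 j hj
      · intro j hjgt
        rw [hagree j (by omega)]
        simp only [hsinit]
        rw [if_pos (by omega)]
      · rw [hsplit]
        refine le_trans hubd ?_
        have hkpos : (0:ℝ) < (k j₀ : ℝ) := by
          have := hk j₀ hj₀mem; positivity
        have hle : condH p (fun ω (i : Fin (k j₀)) => Y j₀ i ω)
            (fun ω (j : ↥(Finset.Icc 1 c)) (i : ↥(sinit j.1)) => Y j.1 i.1 ω)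
            ≤ (k j₀ : ℝ) * Real.log d := by
          refine le_trans (condH_le_entH p hp hp1 _ _) ?_
          refine le_trans (entH_le_log_card p hp hp1 _) ?_
          have hcard : Fintype.card (Fin (k j₀) → α) = d ^ (k j₀) := by
            rw [Fintype.card_fun, hα, Fintype.card_fin]
          rw [hcard]
          rw [Nat.cast_pow, Real.log_pow]
        have hnn : (0:ℝ) ≤ ((k j₀ : ℝ) - (r j₀ : ℝ)) / (k j₀ : ℝ) := by
          apply div_nonneg _ hkpos.le
          have : (r j₀ : ℝ) ≤ (k j₀ : ℝ) := by exact_mod_cast hr j₀ hj₀mem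
          linarith
        calc ((k j₀ : ℝ) - (r j₀ : ℝ)) / (k j₀ : ℝ) *
              condH p (fun ω (i : Fin (k j₀)) => Y j₀ i ω)
                (fun ω (j : ↥(Finset.Icc 1 c)) (i : ↥(sinit j.1)) => Y j.1 i.1 ω)
            ≤ ((k j₀ : ℝ) - (r j₀ : ℝ)) / (k j₀ : ℝ) * ((k j₀ : ℝ) * Real.log d) :=
              mul_le_mul_of_nonneg_left hle hnn
          _ = Real.log d * (((k j₀ : ℝ) - (r j₀ : ℝ)) *
              ∏ i ∈ Finset.Icc (j₀ + 1) j₀, ((k i : ℝ) - (r i : ℝ)) / (k i : ℝ)) := by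
              rw [Finset.Icc_eq_empty (by omega), Finset.prod_empty]
              field_simp
    | succ n hn ih =>
      intro hnc
      obtain ⟨s, hcards, hempty, hbd⟩ := ih (by omega)
      have hmem : n + 1 ∈ Finset.Icc 1 c := Finset.mem_Icc.mpr ⟨by omega, hnc⟩
      obtain ⟨u, hucard, hubd⟩ := han_step p hp hp1 (Y (n+1))
        (fun ω (j : ↥(Finset.Icc 1 c)) (i : ↥(s j.1)) => Y j.1 i.1 ω)
        (hk _ hmem) (r (n+1)) (hr _ hmem)
      have hdet' : condH p (fun ω (i : Fin (k (n+1))) => Y (n+1) i ω)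
          (fun ω (i : Fin (k n)) => Y n i ω) = 0 := by
        have h := hdet (n+1) (by omega) hnc
        simpa using h
      have hstep1 : condH p (fun ω (i : Fin (k (n+1))) => Y (n+1) i ω)
          (fun ω (j : ↥(Finset.Icc 1 c)) (i : ↥(s j.1)) => Y j.1 i.1 ω)
          ≤ condH p (fun ω (i : Fin (k n)) => Y n i ω)
          (fun ω (j : ↥(Finset.Icc 1 c)) (i : ↥(s j.1)) => Y j.1 i.1 ω) := by
        have h1 := condH_le_pair_left p hp (fun ω (i : Fin (k (n+1))) => Y (n+1) i ω)
          (fun ω (i : Fin (k n)) => Y n i ω)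
          (fun ω (j : ↥(Finset.Icc 1 c)) (i : ↥(s j.1)) => Y j.1 i.1 ω)
        have h2 := condH_chain p hp (fun ω (i : Fin (k (n+1))) => Y (n+1) i ω)
          (fun ω (i : Fin (k n)) => Y n i ω)
          (fun ω (j : ↥(Finset.Icc 1 c)) (i : ↥(s j.1)) => Y j.1 i.1 ω)
        have h3 := condH_pair_le_fst p hp hp1 (fun ω (i : Fin (k (n+1))) => Y (n+1) i ω)
          (fun ω (i : Fin (k n)) => Y n i ω)
          (fun ω (j : ↥(Finset.Icc 1 c)) (i : ↥(s j.1)) => Y j.1 i.1 ω)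
        linarith
      set s1 : (j : ℕ) → Finset (Fin (k j)) :=
        fun j => if hj : j = n + 1 then hj ▸ u else s j with hs1
      have hs1top : s1 (n+1) = u := by rw [hs1]; simp
      have hagree : ∀ j, j ≠ n + 1 → s1 j = s j := by
        intro j hj; rw [hs1]; simp [hj]
      have hsplit := ZZ_split p hp c k Y (fun ω (i : Fin (k (n+1))) => Y (n+1) i ω)
        s s1 (n+1) hmem u hagree hs1top
        (by rw [hempty (n+1) (by omega)]; exact Finset.empty_subset u)
      refine ⟨s1, ?_, ?_, ?_⟩
      · intro j hj hjle
        by_cases hjj : j = n + 1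
        · subst hjj; rw [hs1top]; exact hucard
        · rw [hagree j hjj]
          exact hcards j hj (by omega)
      · intro j hjgt
        rw [hagree j (by omega)]
        exact hempty j (by omega)
      · rw [hsplit]
        have hkpos : (0:ℝ) < (k (n+1) : ℝ) := by
          have := hk _ hmem; positivity
        have hnn : (0:ℝ) ≤ ((k (n+1) : ℝ) - (r (n+1) : ℝ)) / (k (n+1) : ℝ) := by
          apply div_nonneg _ hkpos.le
          have : (r (n+1) : ℝ) ≤ (k (n+1) : ℝ) := by exact_mod_cast hr _ hmem
          linarith
        calc condH p (fun ω (i : Fin (k (n+1))) => Y (n+1) i ω)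
              (fun ω => ((fun (j : ↥(Finset.Icc 1 c)) (i : ↥(s j.1)) => Y j.1 i.1 ω),
                (fun i : ↥u => Y (n+1) i.1 ω)))
            ≤ ((k (n+1) : ℝ) - (r (n+1) : ℝ)) / (k (n+1) : ℝ) *
              condH p (fun ω (i : Fin (k (n+1))) => Y (n+1) i ω)
                (fun ω (j : ↥(Finset.Icc 1 c)) (i : ↥(s j.1)) => Y j.1 i.1 ω) := hubd
          _ ≤ ((k (n+1) : ℝ) - (r (n+1) : ℝ)) / (k (n+1) : ℝ) *
              condH p (fun ω (i : Fin (k n)) => Y n i ω)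
                (fun ω (j : ↥(Finset.Icc 1 c)) (i : ↥(s j.1)) => Y j.1 i.1 ω) :=
              mul_le_mul_of_nonneg_left hstep1 hnn
          _ ≤ ((k (n+1) : ℝ) - (r (n+1) : ℝ)) / (k (n+1) : ℝ) *
              (Real.log d * (((k j₀ : ℝ) - (r j₀ : ℝ)) *
                ∏ i ∈ Finset.Icc (j₀ + 1) n, ((k i : ℝ) - (r i : ℝ)) / (k i : ℝ))) :=
              mul_le_mul_of_nonneg_left hbd hnn
          _ = Real.log d * (((k j₀ : ℝ) - (r j₀ : ℝ)) *
                ∏ i ∈ Finset.Icc (j₀ + 1) (n+1), ((k i : ℝ) - (r i : ℝ)) / (k i : ℝ)) := by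
              rw [Finset.prod_Icc_succ_top (by omega : j₀ + 1 ≤ n + 1)]
              ring
  obtain ⟨s, hcards, _, hbd⟩ := main c hj₀c le_rfl
  refine ⟨s, fun j hj => hcards j hj (Finset.mem_Icc.mp hj).2, ?_⟩
  have h1 := condH_le_pair_left p hp M (fun ω (i : Fin (k c)) => Y c i ω)
    (fun ω (j : ↥(Finset.Icc 1 c)) (i : ↥(s j.1)) => Y j.1 i.1 ω)
  have h2 := condH_chain p hp M (fun ω (i : Fin (k c)) => Y c i ω)
    (fun ω (j : ↥(Finset.Icc 1 c)) (i : ↥(s j.1)) => Y j.1 i.1 ω)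
  have h3 := condH_pair_le_fst p hp hp1 M (fun ω (i : Fin (k c)) => Y c i ω)
    (fun ω (j : ↥(Finset.Icc 1 c)) (i : ↥(s j.1)) => Y j.1 i.1 ω)
  have hZ : condH p M (fun ω (j : ↥(Finset.Icc 1 c)) (i : ↥(s j.1)) => Y j.1 i.1 ω)
      ≤ Real.log d * (((k j₀ : ℝ) - (r j₀ : ℝ)) *
          ∏ i ∈ Finset.Icc (j₀ + 1) c, ((k i : ℝ) - (r i : ℝ)) / (k i : ℝ)) := by
    linarith [hdec]
  rw [hj₀eq]
  unfold mutInfo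
  unfold condH at hZ
  linarith
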